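/- A collection C of nonempty subsets of N contains a balanced subcollection if and only if there is no side payment σ (σ ∈ ℝ^N with σ(N) = 0) such that σ(S) > 0 for all S ∈ C. Equivalently: C is unbalanced (contains no balanced subcollection) if and only if there exists σ ∈ ℝ^N with ∑_{i∈N} σ_i = 0 and ∑_{i∈S} σ_i > 0 for all S ∈ C. -/

import Mathlib

open Finset

variable {α : Type*} [Fintype α] [DecidableEq α]

/-- Sum of the payments of the players in coalition `S`. -/
def coalSum (x : α → ℝ) (S : Finset α) : ℝ := ∑ i ∈ S, x i

/-- `B` is a balanced collection on `M` with weights `w`. -/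
def IsBalancedOn (M : Finset α) (B : Finset (Finset α)) (w : Finset α → ℝ) : Prop :=
  (∀ S ∈ B, S.Nonempty ∧ S ⊆ M ∧ 0 < w S) ∧
  (∀ i ∈ M, ∑ S ∈ B.filter (fun S => i ∈ S), w S = 1)

/-- The game `v` is balanced. -/
def BalancedGame (v : Finset α → ℝ) : Prop :=
  ∀ B w, IsBalancedOn (univ : Finset α) B w → ∑ S ∈ B, w S * v S ≤ v univ

/-- `x` is a preimputation of the game `v`. -/
def Preimp (v : Finset α → ℝ) (x : α → ℝ) : Prop := coalSum x univ = v univ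

/-- `y` dominates `x` via the coalition `S`. -/
def Dominates (v : Finset α → ℝ) (y x : α → ℝ) (S : Finset α) : Prop :=
  coalSum y S ≤ v S ∧ ∀ i ∈ S, x i < y i

/-- `x` belongs to the core of the game `v`. -/
def InCore (v : Finset α → ℝ) (x : α → ℝ) : Prop :=
  Preimp v x ∧ ∀ S : Finset α, S.Nonempty → v S ≤ coalSum x S

lemma swap_sum (B : Finset (Finset α)) (w : Finset α → ℝ) (σ : α → ℝ) :
    ∑ S ∈ B, w S * coalSum σ S = ∑ i, (∑ S ∈ B.filter (fun S => i ∈ S), w S) * σ i := by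
  calc ∑ S ∈ B, w S * coalSum σ S
      = ∑ S ∈ B, ∑ i : α, (if i ∈ S then w S * σ i else 0) := by
        refine sum_congr rfl fun S _ => ?_
        rw [Finset.sum_ite_mem, univ_inter, coalSum, mul_sum]
    _ = ∑ i : α, ∑ S ∈ B, (if i ∈ S then w S * σ i else 0) := Finset.sum_comm
    _ = _ := by
        refine sum_congr rfl fun i _ => ?_
        rw [Finset.sum_mul, Finset.sum_filter]
 

/-- The Farkas vector of a coalition. -/
noncomputable def bvec (S : Finset α) : α → ℝ :=
  fun i => (if i ∈ S then 1 else 0) - S.card / Fintype.card α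

lemma hull_to_balanced [Nonempty α] (C : Finset (Finset α)) (hC : ∀ S ∈ C, S.Nonempty)
    (h : (0 : α → ℝ) ∈ convexHull ℝ (bvec '' (C : Set (Finset α)))) :
    ∃ (B : Finset (Finset α)) (w : Finset α → ℝ),
      B ⊆ C ∧ B.Nonempty ∧ IsBalancedOn (univ : Finset α) B w := by
  have hn : (0:ℝ) < Fintype.card α := by positivity
  rw [_root_.convexHull_eq] at h
  obtain ⟨ι, t, w, z, hw0, hw1, hz, hcm⟩ := h
  rw [Finset.centerMass_eq_of_sum_1 _ _ hw1] at hcm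
  -- choose for each i a coalition g i ∈ C with bvec (g i) = z i
  have hex : ∀ i ∈ t, ∃ S, S ∈ C ∧ bvec S = z i := by
    intro i hi
    obtain ⟨S, hS, hSz⟩ := hz i hi
    exact ⟨S, by exact_mod_cast hS, hSz⟩
  classical
  set g : ι → Finset α := fun i => if hi : i ∈ t then (hex i hi).choose else ∅ with hg
  have hgC : ∀ i ∈ t, g i ∈ C := by
    intro i hi; simp only [hg, dif_pos hi]; exact (hex i hi).choose_spec.1
  have hgz : ∀ i ∈ t, bvec (g i) = z i := by
    intro i hi; simp only [hg, dif_pos hi]; exact (hex i hi).choose_spec.2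
  set D : Finset (Finset α) := t.image g with hD
  set w' : Finset α → ℝ := fun S => ∑ i ∈ t.filter (fun i => g i = S), w i with hw'
  have hmaps : ∀ i ∈ t, g i ∈ D := fun i hi => mem_image_of_mem g hi
  have hDC : D ⊆ C := by
    intro S hS; obtain ⟨i, hi, rfl⟩ := mem_image.1 hS; exact hgC i hi
  have hw'0 : ∀ S, 0 ≤ w' S := fun S => sum_nonneg fun i hi => hw0 i (mem_filter.1 hi).1
  have hsum1 : ∑ S ∈ D, w' S = 1 := by
    rw [hw', hD]; rw [Finset.sum_fiberwise_of_maps_to hmaps]; exact hw1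
  have hcomb : ∑ S ∈ D, w' S • bvec S = 0 := by
    have : ∀ S ∈ D, w' S • bvec S = ∑ i ∈ t.filter (fun i => g i = S), w i • z i := by
      intro S hS
      rw [hw', sum_smul]
      refine sum_congr rfl fun i hi => ?_
      obtain ⟨hi1, hi2⟩ := mem_filter.1 hi
      rw [← hi2, hgz i hi1]
    rw [sum_congr rfl this, Finset.sum_fiberwise_of_maps_to hmaps, hcm]
  -- evaluate at each coordinate
  set c : ℝ := ∑ S ∈ D, w' S * (S.card / Fintype.card α) with hc
  have hcoord : ∀ j : α, ∑ S ∈ D.filter (fun S => j ∈ S), w' S = c := by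
    intro j
    have := congrFun hcomb j
    simp only [Finset.sum_apply, Pi.smul_apply, Pi.zero_apply, smul_eq_mul, bvec,
      mul_sub] at this
    rw [sum_sub_distrib] at this
    have h1 : ∑ S ∈ D, w' S * (if j ∈ S then (1:ℝ) else 0)
        = ∑ S ∈ D.filter (fun S => j ∈ S), w' S := by
      rw [Finset.sum_filter]
      exact sum_congr rfl fun S _ => by split <;> simp
    rw [h1] at this
    linarith [this]
  have hc1 : 1 ≤ c * Fintype.card α := by
    have : c * Fintype.card α = ∑ S ∈ D, w' S * S.card := by
      rw [hc, sum_mul]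
      refine sum_congr rfl fun S _ => ?_
      field_simp
    rw [this, ← hsum1]
    refine sum_le_sum fun S hS => ?_
    have h1 : (1:ℝ) ≤ S.card := by
      have := hC S (hDC hS)
      exact_mod_cast Finset.card_pos.2 this
    nlinarith [hw'0 S]
  have hcpos : 0 < c := by nlinarith
  refine ⟨D.filter (fun S => 0 < w' S), fun S => w' S / c, ?_, ?_, ?_, ?_⟩
  · exact (filter_subset _ _).trans hDC
  · -- nonempty
    have : ∃ S ∈ D, 0 < w' S := by
      by_contra hcon
      push_neg at hcon
      have : ∑ S ∈ D, w' S = 0 :=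
        sum_eq_zero fun S hS => le_antisymm (hcon S hS) (hw'0 S)
      rw [hsum1] at this; norm_num at this
    obtain ⟨S, hS, hSp⟩ := this
    exact ⟨S, mem_filter.2 ⟨hS, hSp⟩⟩
  · intro S hS
    obtain ⟨hS1, hS2⟩ := mem_filter.1 hS
    exact ⟨hC S (hDC hS1), subset_univ S, div_pos hS2 hcpos⟩
  · intro j _
    have hsub : (D.filter (fun S => 0 < w' S)).filter (fun S => j ∈ S)
        ⊆ D.filter (fun S => j ∈ S) := by
      intro S hS
      simp only [mem_filter] at hS ⊢
      exact ⟨hS.1.1, hS.2⟩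
    have hzero : ∀ S ∈ D.filter (fun S => j ∈ S),
        S ∉ (D.filter (fun S => 0 < w' S)).filter (fun S => j ∈ S) → w' S / c = 0 := by
      intro S hS hS2
      simp only [mem_filter] at hS hS2
      have : ¬ 0 < w' S := fun h => hS2 ⟨⟨hS.1, h⟩, hS.2⟩
      have : w' S = 0 := le_antisymm (not_lt.1 this) (hw'0 S)
      simp [this]
    rw [Finset.sum_subset hsub hzero, ← Finset.sum_div, hcoord j, div_self (ne_of_gt hcpos)]


lemma sep_to_sigma [Nonempty α] (C : Finset (Finset α))
    (h : (0 : α → ℝ) ∉ convexHull ℝ (bvec '' (C : Set (Finset α)))) :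
    ∃ σ : α → ℝ, coalSum σ univ = 0 ∧ ∀ S ∈ C, 0 < coalSum σ S := by
  have hn : (0:ℝ) < Fintype.card α := by positivity
  obtain ⟨f, u, hfu, hpos⟩ := geometric_hahn_banach_point_closed
    (convex_convexHull ℝ _) ((Set.toFinite _).isClosed_convexHull ℝ) h
  rw [map_zero] at hfu
  set σ0 : α → ℝ := fun i => f (fun j => if i = j then 1 else 0) with hσ0
  have hf : ∀ x : α → ℝ, f x = ∑ i, x i * σ0 i := by
    intro x
    conv_lhs => rw [pi_eq_sum_univ x]
    rw [map_sum]
    exact sum_congr rfl fun i _ => by rw [map_smul, smul_eq_mul]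
  have hfb : ∀ S : Finset α,
      f (bvec S) = coalSum σ0 S - S.card / Fintype.card α * coalSum σ0 univ := by
    intro S
    rw [hf]
    simp only [bvec, sub_mul]
    rw [sum_sub_distrib]
    congr 1
    · simp [coalSum, ite_mul, Finset.sum_ite_mem]
    · rw [coalSum, mul_sum]
  refine ⟨fun i => σ0 i - coalSum σ0 univ / Fintype.card α, ?_, ?_⟩
  · rw [coalSum, sum_sub_distrib, sum_const, card_univ, nsmul_eq_mul]
    rw [mul_div_cancel₀ _ (ne_of_gt hn)]
    rw [coalSum]; ring
  · intro S hS
    have hb : bvec S ∈ convexHull ℝ (bvec '' (C : Set (Finset α))) :=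
      subset_convexHull ℝ _ (Set.mem_image_of_mem _ (by exact_mod_cast hS))
    have := hpos _ hb
    rw [hfb S] at this
    have heq : coalSum (fun i => σ0 i - coalSum σ0 univ / Fintype.card α) S
        = coalSum σ0 S - S.card / Fintype.card α * coalSum σ0 univ := by
      simp only [coalSum, sum_sub_distrib, sum_const, nsmul_eq_mul]
      ring
    rw [heq]

    linarith

theorem stmt_6 [Nonempty α] (C : Finset (Finset α)) (hC : ∀ S ∈ C, S.Nonempty) :
    (¬ ∃ (B : Finset (Finset α)) (w : Finset α → ℝ),
        B ⊆ C ∧ B.Nonempty ∧ IsBalancedOn (univ : Finset α) B w) ↔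
    ∃ σ : α → ℝ, coalSum σ univ = 0 ∧ ∀ S ∈ C, 0 < coalSum σ S := by
  constructor
  · intro hno
    apply sep_to_sigma C
    intro h0
    exact hno (hull_to_balanced C hC h0)
  · rintro ⟨σ, hσ0, hσpos⟩ ⟨B, w, hBC, hBne, hbal⟩
    have h1 := swap_sum B w σ
    have h2 : ∑ i, (∑ S ∈ B.filter (fun S => i ∈ S), w S) * σ i = ∑ i, σ i :=
      sum_congr rfl fun i _ => by rw [hbal.2 i (mem_univ i), one_mul]
    have hlt : 0 < ∑ S ∈ B, w S * coalSum σ S :=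
      sum_pos (fun S hS => mul_pos (hbal.1 S hS).2.2 (hσpos S (hBC hS))) hBne
    rw [h1, h2] at hlt
    rw [coalSum] at hσ0
    linarith
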